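/- Let a be a real number and define X(x,y,z) = (ax+xz, ay+yz, -2az - x² - y² - z²) and, for fixed i,j ∈ {0,1,2} with i+j = 2, Δ(x,y,z) = (y·xⁱyʲ·(4az + x² + y² + 2z²), -x·xⁱyʲ·(4az + x² + y² + 2z²), 0). Then for all (x,y,z) ∈ ℝ³, (DΔ)(x,y,z) · X(x,y,z) - (DX)(x,y,z) · Δ(x,y,z) = 0. -/

import Mathlib

private lemma fd1 (p v : ℝ × ℝ × ℝ) : fderiv ℝ (fun q : ℝ×ℝ×ℝ => q.1) p v = v.1 := by
  rw [show (fun q : ℝ×ℝ×ℝ => q.1) = Prod.fst from rfl, fderiv_fst]; rfl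

private lemma fd21 (p v : ℝ × ℝ × ℝ) : fderiv ℝ (fun q : ℝ×ℝ×ℝ => q.2.1) p v = v.2.1 := by
  have : HasFDerivAt (fun q : ℝ×ℝ×ℝ => q.2.1)
      ((ContinuousLinearMap.fst ℝ ℝ ℝ).comp (ContinuousLinearMap.snd ℝ ℝ (ℝ×ℝ))) p :=
    (hasFDerivAt_snd).fst
  rw [this.fderiv]; rfl

private lemma fd22 (p v : ℝ × ℝ × ℝ) : fderiv ℝ (fun q : ℝ×ℝ×ℝ => q.2.2) p v = v.2.2 := by
  have : HasFDerivAt (fun q : ℝ×ℝ×ℝ => q.2.2)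
      ((ContinuousLinearMap.snd ℝ ℝ ℝ).comp (ContinuousLinearMap.snd ℝ ℝ (ℝ×ℝ))) p :=
    (hasFDerivAt_snd).snd
  rw [this.fderiv]; rfl

theorem stmt3 (a : ℝ) (i j : ℕ) (hi : i ≤ 2) (hj : j ≤ 2) (hij : i + j = 2)
    (X Δ : ℝ × ℝ × ℝ → ℝ × ℝ × ℝ)
    (hX : X = fun p => (a*p.1 + p.1*p.2.2,
                        a*p.2.1 + p.2.1*p.2.2,
                        -2*a*p.2.2 - p.1^2 - p.2.1^2 - p.2.2^2))
    (hΔ : Δ = fun p =>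
      (p.2.1 * (p.1^i * p.2.1^j) * (4*a*p.2.2 + p.1^2 + p.2.1^2 + 2*p.2.2^2),
       -p.1 * (p.1^i * p.2.1^j) * (4*a*p.2.2 + p.1^2 + p.2.1^2 + 2*p.2.2^2),
       0)) :
    ∀ p : ℝ × ℝ × ℝ, fderiv ℝ Δ p (X p) - fderiv ℝ X p (Δ p) = 0 := by
  subst hX hΔ
  intro p
  interval_cases i <;> interval_cases j <;> (try omega) <;>
  · simp only [pow_zero, pow_one, pow_two, one_mul, mul_one, neg_mul]
    simp (disch := fun_prop) only [DifferentiableAt.fderiv_prodMk,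
      ContinuousLinearMap.prod_apply, fderiv_fun_add, fderiv_fun_sub, fderiv_fun_neg, fderiv_fun_mul,
      fderiv_const_mul, fderiv_const, fderiv_fun_const, fderiv_fst, fderiv_snd, fd1, fd21, fd22, Pi.zero_apply,
      Pi.neg_apply, ContinuousLinearMap.add_apply, ContinuousLinearMap.sub_apply, ContinuousLinearMap.smul_apply,
      ContinuousLinearMap.zero_apply, ContinuousLinearMap.neg_apply, smul_eq_mul,
      ContinuousLinearMap.coe_fst', ContinuousLinearMap.coe_snd',
      ContinuousLinearMap.coe_comp', Function.comp_apply]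
    rw [sub_eq_zero]
    simp only [Prod.mk.injEq]
    refine ⟨by ring, by ring, by ring⟩
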